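/- Let G be a (possibly infinite) d-regular graph with nonbacktracking operator B on directed edges. Suppose θ with |θ| > √(d−1) is an ℓ²-eigenvalue of B with unit eigenvector φ, and suppose G = T^∞G₀ for a finite graph G₀ with vertex set V₀. Then φ vanishes on every directed edge not supported on V₀ that points towards V₀, and consequently θ is an eigenvalue of the submatrix B₀ of B indexed by directed edges with both endpoints in V₀, with eigenvector the restriction φ₀ of φ to those edges. -/

import Mathlib

noncomputable section

/-- Vertices of the infinite tree extension `T^∞ G₀`. -/
abbrev TInfVert (d : ℕ) (V₀ : Type) [Fintype V₀] (F : SimpleGraph V₀)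
    [DecidableRel F.Adj] : Type :=
  V₀ ⊕ ((Σ v : V₀, Fin (d - F.degree v)) × List (Fin (d - 1)))

/-- The infinite tree extension `T^∞ G₀`. -/
def TInf (d : ℕ) (V₀ : Type) [Fintype V₀] (F : SimpleGraph V₀) [DecidableRel F.Adj] :
    SimpleGraph (TInfVert d V₀ F) where
  Adj x y :=
    match x, y with
    | Sum.inl u, Sum.inl v => F.Adj u v
    | Sum.inl u, Sum.inr (t, l) => t.1 = u ∧ l = []
    | Sum.inr (t, l), Sum.inl u => t.1 = u ∧ l = []
    | Sum.inr (t, l), Sum.inr (s, m) => t = s ∧ ∃ a, m = l ++ [a] ∨ l = m ++ [a]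
  symm := by
    constructor
    rintro (u | ⟨t, l⟩) (v | ⟨s, m⟩) h
    · exact F.symm.symm _ _ h
    · exact h
    · exact h
    · exact ⟨h.1.symm, h.2.imp fun a ha => ha.symm⟩
  loopless := by
    constructor
    rintro (u | ⟨t, l⟩) h
    · exact F.loopless.irrefl u h
    · obtain ⟨a, ha | ha⟩ := h.2 <;> simpa using congrArg List.length ha

/-- Distance of a vertex of `T^∞ G₀` from `V₀`. -/
def TIlevel (d : ℕ) (V₀ : Type) [Fintype V₀] (F : SimpleGraph V₀) [DecidableRel F.Adj] :
    TInfVert d V₀ F → ℕ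
  | Sum.inl _ => 0
  | Sum.inr (_, l) => l.length + 1

/-- Directed edges of a graph. -/
abbrev DirEdge {V : Type*} (G : SimpleGraph V) : Type _ := {p : V × V // G.Adj p.1 p.2}


section Helpers

variable (d : ℕ) (V₀ : Type) [Fintype V₀] (G₀ : SimpleGraph V₀) [DecidableRel G₀.Adj]

/-- The parent of a vertex in the tree part (junk value on `V₀`). -/
def TIpar : TInfVert d V₀ G₀ → TInfVert d V₀ G₀
  | Sum.inl u => Sum.inl u
  | Sum.inr (t, l) => if l = [] then Sum.inl t.1 else Sum.inr (t, l.dropLast)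

lemma TIpar_nil (t : Σ v : V₀, Fin (d - G₀.degree v)) :
    TIpar d V₀ G₀ (Sum.inr (t, ([] : List (Fin (d - 1))))) = Sum.inl t.1 := by
  simp [TIpar]

lemma TIpar_concat (t : Σ v : V₀, Fin (d - G₀.degree v)) (l : List (Fin (d - 1)))
    (a : Fin (d - 1)) :
    TIpar d V₀ G₀ (Sum.inr (t, l ++ [a])) = Sum.inr (t, l) := by
  simp [TIpar]

lemma TIpar_adj (t : Σ v : V₀, Fin (d - G₀.degree v)) (l : List (Fin (d - 1))) :
    (TInf d V₀ G₀).Adj (Sum.inr (t, l)) (TIpar d V₀ G₀ (Sum.inr (t, l))) := by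
  rcases List.eq_nil_or_concat l with rfl | ⟨m, a, rfl⟩
  · rw [TIpar_nil]; exact ⟨rfl, rfl⟩
  · simp only [List.concat_eq_append]
    rw [TIpar_concat]; exact ⟨rfl, a, Or.inr rfl⟩

/-- The directed edge pointing from a tree vertex towards `V₀`. -/
def towE (t : Σ v : V₀, Fin (d - G₀.degree v)) (l : List (Fin (d - 1))) :
    DirEdge (TInf d V₀ G₀) :=
  ⟨(Sum.inr (t, l), TIpar d V₀ G₀ (Sum.inr (t, l))), TIpar_adj d V₀ G₀ t l⟩

/-- The directed edge pointing away from `V₀` into a tree vertex. -/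
def awE (t : Σ v : V₀, Fin (d - G₀.degree v)) (l : List (Fin (d - 1))) :
    DirEdge (TInf d V₀ G₀) :=
  ⟨(TIpar d V₀ G₀ (Sum.inr (t, l)), Sum.inr (t, l)), (TIpar_adj d V₀ G₀ t l).symm⟩

lemma adj_inr_cases {y : TInfVert d V₀ G₀} {t : Σ v : V₀, Fin (d - G₀.degree v)}
    {l : List (Fin (d - 1))} (h : (TInf d V₀ G₀).Adj y (Sum.inr (t, l))) :
    y = TIpar d V₀ G₀ (Sum.inr (t, l)) ∨ ∃ a, y = Sum.inr (t, l ++ [a]) := by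
  rcases y with u | ⟨s, m⟩
  · obtain ⟨h1, h2⟩ : t.1 = u ∧ l = [] := h
    subst h1; subst h2
    exact Or.inl (TIpar_nil d V₀ G₀ t).symm
  · obtain ⟨h1, a, h2 | h2⟩ : s = t ∧ ∃ a, l = m ++ [a] ∨ m = l ++ [a] := h
    · subst h1; subst h2
      exact Or.inl (TIpar_concat d V₀ G₀ s m a).symm
    · subst h1; subst h2
      exact Or.inr ⟨a, rfl⟩

lemma towE_inj {t : Σ v : V₀, Fin (d - G₀.degree v)} {l₁ l₂ : List (Fin (d - 1))}
    (h : towE d V₀ G₀ t l₁ = towE d V₀ G₀ t l₂) : l₁ = l₂ := by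
  have h2 := congrArg (fun e => e.1.1) h
  simpa [towE] using h2

lemma child_ne_par (t : Σ v : V₀, Fin (d - G₀.degree v)) (l : List (Fin (d - 1)))
    (a : Fin (d - 1)) :
    (Sum.inr (t, l ++ [a]) : TInfVert d V₀ G₀) ≠ TIpar d V₀ G₀ (Sum.inr (t, l)) := by
  rcases List.eq_nil_or_concat l with rfl | ⟨m, b, rfl⟩
  · rw [TIpar_nil]; simp
  · simp only [List.concat_eq_append]
    rw [TIpar_concat]
    intro hc
    have h2 : m ++ [b] ++ [a] = m ++ [b] := by simpa using hc
    have := congrArg List.length h2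
    simp at this

lemma toward_eq_towE (f : DirEdge (TInf d V₀ G₀))
    (h : TIlevel d V₀ G₀ f.1.2 < TIlevel d V₀ G₀ f.1.1) :
    ∃ t l, f = towE d V₀ G₀ t l := by
  obtain ⟨⟨x, y⟩, hadj⟩ := f
  rcases x with u | ⟨t, l⟩
  · simp [TIlevel] at h
  · rcases y with u | ⟨s, m⟩
    · obtain ⟨h1, h2⟩ : t.1 = u ∧ l = [] := hadj
      subst h1; subst h2
      exact ⟨t, [], Subtype.ext (by simp [towE, TIpar_nil])⟩
    · obtain ⟨h1, a, h2 | h2⟩ : t = s ∧ ∃ a, m = l ++ [a] ∨ l = m ++ [a] := hadj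
      · subst h1; subst h2
        simp [TIlevel] at h
      · subst h1; subst h2
        exact ⟨t, m ++ [a], Subtype.ext (by simp [towE, TIpar_concat])⟩

lemma ofFn_cons {n : ℕ} {α : Type*} (a : α) (g : Fin n → α) :
    List.ofFn (Fin.cons a g : Fin (n + 1) → α) = a :: List.ofFn g := by
  rw [List.ofFn_succ]
  simp

end Helpers

/-- If `θ` with `|θ| > √(d-1)` is an ℓ²-eigenvalue of the nonbacktracking operator `B` of
`G = T^∞ G₀` with unit eigenvector `φ`, then `φ` vanishes on every directed edge pointing
towards `V₀`, and `θ` is an eigenvalue of the restriction `B₀` of `B` to the directed edges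
supported on `V₀`, with eigenvector the (nonzero) restriction of `φ`. -/
theorem statement4 (d : ℕ) (hd : 3 ≤ d) (V₀ : Type) [Fintype V₀]
    (G₀ : SimpleGraph V₀) [DecidableRel G₀.Adj] (hdeg : ∀ v, G₀.degree v ≤ d)
    (θ : ℝ) (hθ : Real.sqrt ((d : ℝ) - 1) < |θ|)
    (φ : DirEdge (TInf d V₀ G₀) → ℝ)
    (hsq : Summable fun e => φ e ^ 2) (hnorm : ∑' e, φ e ^ 2 = 1)
    (heig : ∀ f : DirEdge (TInf d V₀ G₀),
      (∑' e : {e : DirEdge (TInf d V₀ G₀) //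
          e.1.2 = f.1.1 ∧ e.1 ≠ (f.1.2, f.1.1)}, φ (e : DirEdge (TInf d V₀ G₀)))
        = θ * φ f) :
    (∀ f : DirEdge (TInf d V₀ G₀),
      TIlevel d V₀ G₀ f.1.2 < TIlevel d V₀ G₀ f.1.1 → φ f = 0) ∧
    (∃ f : DirEdge (TInf d V₀ G₀),
      ((f.1.1).isLeft = true ∧ (f.1.2).isLeft = true) ∧ φ f ≠ 0) ∧
    (∀ f : DirEdge (TInf d V₀ G₀), (f.1.1).isLeft = true → (f.1.2).isLeft = true →
      (∑' e : {e : DirEdge (TInf d V₀ G₀) //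
          ((e.1.1).isLeft = true ∧ (e.1.2).isLeft = true) ∧
          e.1.2 = f.1.1 ∧ e.1 ≠ (f.1.2, f.1.1)}, φ (e : DirEdge (TInf d V₀ G₀)))
        = θ * φ f) := by
  classical
  have hd1 : (0:ℝ) < (d : ℝ) - 1 := by
    have : (3:ℝ) ≤ (d : ℝ) := by exact_mod_cast hd
    linarith
  have hθ2 : (d : ℝ) - 1 < θ ^ 2 := by
    calc (d : ℝ) - 1 = Real.sqrt ((d : ℝ) - 1) ^ 2 := (Real.sq_sqrt hd1.le).symm
      _ < |θ| ^ 2 := by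
          exact pow_lt_pow_left₀ hθ (Real.sqrt_nonneg _) two_ne_zero
      _ = θ ^ 2 := sq_abs θ
  have hθpos : (0:ℝ) < θ ^ 2 := hd1.trans hθ2
  have hθne : θ ≠ 0 := by
    intro h0
    rw [h0] at hθpos
    simp at hθpos
  -- Step 1: the eigenvector equation at a toward-pointing edge
  have hstep : ∀ (t : Σ v : V₀, Fin (d - G₀.degree v)) (l : List (Fin (d - 1))),
      θ * φ (towE d V₀ G₀ t l) = ∑ a : Fin (d - 1), φ (towE d V₀ G₀ t (l ++ [a])) := by
    intro t l
    rw [← heig (towE d V₀ G₀ t l)]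
    have hE : Function.Bijective (fun a : Fin (d - 1) =>
        (⟨towE d V₀ G₀ t (l ++ [a]), by
            refine ⟨TIpar_concat d V₀ G₀ t l a, ?_⟩
            intro hc
            exact child_ne_par d V₀ G₀ t l a (congrArg Prod.fst hc)⟩ :
          {e : DirEdge (TInf d V₀ G₀) // e.1.2 = (towE d V₀ G₀ t l).1.1 ∧
            e.1 ≠ ((towE d V₀ G₀ t l).1.2, (towE d V₀ G₀ t l).1.1)})) := by
      constructor
      · intro a b hab
        have h1 := towE_inj d V₀ G₀ (congrArg Subtype.val hab)
        simpa using h1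
      · rintro ⟨e, he1, he2⟩
        have he1' : e.1.2 = Sum.inr (t, l) := he1
        have hadj : (TInf d V₀ G₀).Adj e.1.1 (Sum.inr (t, l)) := by
          rw [← he1']; exact e.2
        rcases adj_inr_cases d V₀ G₀ hadj with hp | ⟨a, ha⟩
        · exact absurd (Prod.ext hp he1) he2
        · refine ⟨a, ?_⟩
          apply Subtype.ext
          apply Subtype.ext
          apply Prod.ext
          · exact ha.symm
          · exact (TIpar_concat d V₀ G₀ t l a).trans he1.symm
    rw [← (Equiv.ofBijective _ hE).tsum_eq, tsum_fintype]
    rfl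
  -- Step 2: iterate the eigenvector equation k times
  have hstepk : ∀ (k : ℕ) (t : Σ v : V₀, Fin (d - G₀.degree v)) (l : List (Fin (d - 1))),
      θ ^ k * φ (towE d V₀ G₀ t l)
        = ∑ g : Fin k → Fin (d - 1), φ (towE d V₀ G₀ t (l ++ List.ofFn g)) := by
    intro k
    induction k with
    | zero => intro t l; simp
    | succ k ih =>
      intro t l
      have h1 : θ ^ (k + 1) * φ (towE d V₀ G₀ t l)
          = θ ^ k * (θ * φ (towE d V₀ G₀ t l)) := by ring
      rw [h1, hstep t l, Finset.mul_sum]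
      rw [Finset.sum_congr rfl fun a _ => ih t (l ++ [a])]
      have hsplit : (∑ g : Fin (k + 1) → Fin (d - 1), φ (towE d V₀ G₀ t (l ++ List.ofFn g)))
          = ∑ p : Fin (d - 1) × (Fin k → Fin (d - 1)),
              φ (towE d V₀ G₀ t (l ++ List.ofFn (Fin.cons p.1 p.2))) :=
        (Fintype.sum_equiv (Fin.consEquiv fun _ => Fin (d - 1)) _ _ fun p => rfl).symm
      rw [hsplit, Fintype.sum_prod_type]
      refine Finset.sum_congr rfl fun a _ => Finset.sum_congr rfl fun g _ => ?_
      congr 1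
      rw [ofFn_cons, List.append_assoc, List.singleton_append]
  -- Finite sums of squares of φ are bounded by 1
  have hub : ∀ s : Finset (DirEdge (TInf d V₀ G₀)), ∑ e ∈ s, φ e ^ 2 ≤ 1 := by
    intro s
    rw [← hnorm]
    exact Summable.sum_le_tsum s (fun e _ => sq_nonneg _) hsq
  have hsumsq : ∀ (k : ℕ) (t : Σ v : V₀, Fin (d - G₀.degree v)) (l : List (Fin (d - 1))),
      ∑ g : Fin k → Fin (d - 1), φ (towE d V₀ G₀ t (l ++ List.ofFn g)) ^ 2 ≤ 1 := by
    intro k t l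
    have hinj : ∀ g₁ ∈ (Finset.univ : Finset (Fin k → Fin (d - 1))), ∀ g₂ ∈ Finset.univ,
        towE d V₀ G₀ t (l ++ List.ofFn g₁) = towE d V₀ G₀ t (l ++ List.ofFn g₂) → g₁ = g₂ := by
      intro g₁ _ g₂ _ hg
      have h1 := towE_inj d V₀ G₀ hg
      have h2 : List.ofFn g₁ = List.ofFn g₂ := by simpa using h1
      exact List.ofFn_injective h2
    have himg : ∑ e ∈ Finset.image (fun g : Fin k → Fin (d - 1) =>
            towE d V₀ G₀ t (l ++ List.ofFn g)) Finset.univ, φ e ^ 2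
        = ∑ g : Fin k → Fin (d - 1), φ (towE d V₀ G₀ t (l ++ List.ofFn g)) ^ 2 :=
      Finset.sum_image hinj
    rw [← himg]
    exact hub _
  -- Step 3: Cauchy–Schwarz bound
  have hsq1 : ∀ (t : Σ v : V₀, Fin (d - G₀.degree v)) (l : List (Fin (d - 1))) (k : ℕ),
      (θ ^ 2) ^ k * φ (towE d V₀ G₀ t l) ^ 2 ≤ ((d : ℝ) - 1) ^ k := by
    intro t l k
    have hcard : ((Fintype.card (Fin k → Fin (d - 1)) : ℝ)) = ((d : ℝ) - 1) ^ k := by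
      rw [Fintype.card_fun]
      simp
      rw [Nat.cast_sub (by omega : 1 ≤ d)]
      simp
    calc (θ ^ 2) ^ k * φ (towE d V₀ G₀ t l) ^ 2
        = (θ ^ k * φ (towE d V₀ G₀ t l)) ^ 2 := by ring
      _ = (∑ g : Fin k → Fin (d - 1), φ (towE d V₀ G₀ t (l ++ List.ofFn g))) ^ 2 := by
          rw [hstepk k t l]
      _ ≤ (Finset.univ.card : ℝ) *
            ∑ g : Fin k → Fin (d - 1), φ (towE d V₀ G₀ t (l ++ List.ofFn g)) ^ 2 :=
          sq_sum_le_card_mul_sum_sq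
      _ ≤ (Finset.univ.card : ℝ) * 1 := by
          refine mul_le_mul_of_nonneg_left (hsumsq k t l) (by positivity)
      _ = ((d : ℝ) - 1) ^ k := by
          rw [mul_one, Finset.card_univ, hcard]
  -- Step 4: φ vanishes on toward-pointing edges
  have htow : ∀ (t : Σ v : V₀, Fin (d - G₀.degree v)) (l : List (Fin (d - 1))),
      φ (towE d V₀ G₀ t l) = 0 := by
    intro t l
    set r : ℝ := ((d : ℝ) - 1) / θ ^ 2 with hr
    have hrlt : r < 1 := (div_lt_one hθpos).mpr hθ2
    have hrnn : 0 ≤ r := div_nonneg hd1.le hθpos.le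
    have hb : ∀ k : ℕ, φ (towE d V₀ G₀ t l) ^ 2 ≤ r ^ k := by
      intro k
      rw [hr, div_pow, le_div_iff₀ (pow_pos hθpos k)]
      calc φ (towE d V₀ G₀ t l) ^ 2 * (θ ^ 2) ^ k
          = (θ ^ 2) ^ k * φ (towE d V₀ G₀ t l) ^ 2 := by ring
        _ ≤ ((d : ℝ) - 1) ^ k := hsq1 t l k
    have hlim : Filter.Tendsto (fun k : ℕ => r ^ k) Filter.atTop (nhds 0) :=
      tendsto_pow_atTop_nhds_zero_of_lt_one hrnn hrlt
    have hle0 : φ (towE d V₀ G₀ t l) ^ 2 ≤ 0 := ge_of_tendsto' hlim hb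
    have h0 : φ (towE d V₀ G₀ t l) ^ 2 = 0 := le_antisymm hle0 (sq_nonneg _)
    exact pow_eq_zero_iff two_ne_zero |>.mp h0
  -- Claim 1
  have claim1 : ∀ f : DirEdge (TInf d V₀ G₀),
      TIlevel d V₀ G₀ f.1.2 < TIlevel d V₀ G₀ f.1.1 → φ f = 0 := by
    intro f h
    obtain ⟨t, l, rfl⟩ := toward_eq_towE d V₀ G₀ f h
    exact htow t l
  refine ⟨claim1, ?_, ?_⟩
  -- Claim 2
  · by_contra hno
    push_neg at hno
    have haw : ∀ (l : List (Fin (d - 1))) (t : Σ v : V₀, Fin (d - G₀.degree v)),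
        φ (awE d V₀ G₀ t l) = 0 := by
      intro l
      induction l using List.reverseRecOn with
      | nil =>
        intro t
        have h := heig (awE d V₀ G₀ t [])
        have h0 : (∑' e : {e : DirEdge (TInf d V₀ G₀) //
            e.1.2 = (awE d V₀ G₀ t []).1.1 ∧
            e.1 ≠ ((awE d V₀ G₀ t []).1.2, (awE d V₀ G₀ t []).1.1)},
            φ (e : DirEdge (TInf d V₀ G₀))) = 0 := by
          have hz : ∀ e : {e : DirEdge (TInf d V₀ G₀) //
              e.1.2 = (awE d V₀ G₀ t []).1.1 ∧
              e.1 ≠ ((awE d V₀ G₀ t []).1.2, (awE d V₀ G₀ t []).1.1)},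
              φ (e : DirEdge (TInf d V₀ G₀)) = 0 := by
            rintro ⟨⟨⟨x, y⟩, hadj⟩, he1, he2⟩
            have h1 : y = Sum.inl t.1 := by
              rw [show (awE d V₀ G₀ t []).1.1 = Sum.inl t.1 from TIpar_nil d V₀ G₀ t] at he1
              exact he1
            subst h1
            rcases x with v | ⟨s, m⟩
            · exact hno _ ⟨rfl, rfl⟩
            · exact claim1 _ (by simp [TIlevel])
          rw [tsum_congr hz]
          exact tsum_zero
        rw [h0] at h
        exact ((mul_eq_zero.mp h.symm).resolve_left hθne)
      | append_singleton m a ih =>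
        intro t
        have h := heig (awE d V₀ G₀ t (m ++ [a]))
        have h0 : (∑' e : {e : DirEdge (TInf d V₀ G₀) //
            e.1.2 = (awE d V₀ G₀ t (m ++ [a])).1.1 ∧
            e.1 ≠ ((awE d V₀ G₀ t (m ++ [a])).1.2, (awE d V₀ G₀ t (m ++ [a])).1.1)},
            φ (e : DirEdge (TInf d V₀ G₀))) = 0 := by
          have hz : ∀ e : {e : DirEdge (TInf d V₀ G₀) //
              e.1.2 = (awE d V₀ G₀ t (m ++ [a])).1.1 ∧
              e.1 ≠ ((awE d V₀ G₀ t (m ++ [a])).1.2, (awE d V₀ G₀ t (m ++ [a])).1.1)},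
              φ (e : DirEdge (TInf d V₀ G₀)) = 0 := by
            rintro ⟨⟨⟨x, y⟩, hadj⟩, he1, he2⟩
            have h1 : y = Sum.inr (t, m) := by
              rw [show (awE d V₀ G₀ t (m ++ [a])).1.1 = Sum.inr (t, m) from
                TIpar_concat d V₀ G₀ t m a] at he1
              exact he1
            subst h1
            rcases adj_inr_cases d V₀ G₀ hadj with hp | ⟨b, hb⟩
            · have : (⟨(x, Sum.inr (t, m)), hadj⟩ : DirEdge (TInf d V₀ G₀))
                  = awE d V₀ G₀ t m := Subtype.ext (Prod.ext hp rfl)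
              exact (congrArg φ this).trans (ih t)
            · subst hb
              exact claim1 _ (by simp [TIlevel])
          rw [tsum_congr hz]
          exact tsum_zero
        rw [h0] at h
        exact ((mul_eq_zero.mp h.symm).resolve_left hθne)
    have hall : ∀ f : DirEdge (TInf d V₀ G₀), φ f = 0 := by
      rintro ⟨⟨x, y⟩, hadj⟩
      rcases x with u | ⟨t, l⟩
      · rcases y with v | ⟨s, m⟩
        · exact hno _ ⟨rfl, rfl⟩
        · obtain ⟨h1, h2⟩ : s.1 = u ∧ m = [] := id hadj
          subst h1; subst h2
          have : (⟨(Sum.inl s.1, Sum.inr (s, [])), hadj⟩ : DirEdge (TInf d V₀ G₀))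
              = awE d V₀ G₀ s [] := Subtype.ext (Prod.ext (TIpar_nil d V₀ G₀ s).symm rfl)
          exact (congrArg φ this).trans (haw [] s)
      · rcases y with v | ⟨s, m⟩
        · exact claim1 _ (by simp [TIlevel])
        · obtain ⟨h1, b, h2 | h2⟩ : t = s ∧ ∃ a, m = l ++ [a] ∨ l = m ++ [a] := id hadj
          · subst h1; subst h2
            have : (⟨(Sum.inr (t, l), Sum.inr (t, l ++ [b])), hadj⟩ : DirEdge (TInf d V₀ G₀))
                = awE d V₀ G₀ t (l ++ [b]) :=
              Subtype.ext (Prod.ext (TIpar_concat d V₀ G₀ t l b).symm rfl)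
            exact (congrArg φ this).trans (haw (l ++ [b]) t)
          · subst h1; subst h2
            exact claim1 _ (by simp [TIlevel])
    have h1 : (1:ℝ) = 0 := by
      rw [← hnorm]
      simp [hall]
    norm_num at h1
  -- Claim 3
  · intro f hl hr
    obtain ⟨u, hu⟩ := Sum.isLeft_iff.mp hl
    rw [← heig f]
    have hleft : ∀ e : {e : DirEdge (TInf d V₀ G₀) //
        e.1.2 = f.1.1 ∧ e.1 ≠ (f.1.2, f.1.1)}, φ (e : DirEdge (TInf d V₀ G₀)) ≠ 0 →
        ((e : DirEdge (TInf d V₀ G₀)).1.1.isLeft = true ∧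
          (e : DirEdge (TInf d V₀ G₀)).1.2.isLeft = true) := by
      intro e hne
      have h2 : (e : DirEdge (TInf d V₀ G₀)).1.2 = f.1.1 := e.2.1
      constructor
      · rcases he : (e : DirEdge (TInf d V₀ G₀)).1.1 with v | ⟨t, l⟩
        · rfl
        · exfalso
          apply hne
          apply claim1
          rw [he, h2, hu]
          simp [TIlevel]
      · rw [h2, hu]; rfl
    symm
    refine tsum_eq_tsum_of_ne_zero_bij (fun x => ⟨x.1.1, x.1.2.2⟩) ?_ ?_ ?_
    · intro x y hxy
      simp only [Subtype.mk.injEq] at hxy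
      exact Subtype.ext (Subtype.ext hxy)
    · intro e he
      exact ⟨⟨⟨e.1, ⟨hleft e he, e.2⟩⟩, he⟩, Subtype.ext rfl⟩
    · intro x
      rfl

end
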